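/- With π the stereographic projection of S^d from the north pole, for every real t < 1 and all points a, b ∈ S^d with last coordinates a_{d+1} ≤ t and b_{d+1} ≤ t, one has ‖π(a) - π(b)‖ ≤ ((2-t)/(1-t)²)·dist(a,b). -/

import Mathlib

/-- Stereographic projection of `S^d ⊂ ℝ^{d+1}` from the north pole `(0,…,0,1)` onto `ℝ^d`. -/
noncomputable def stereoProj (d : ℕ) (x : EuclideanSpace ℝ (Fin (d + 1))) :
    EuclideanSpace ℝ (Fin d) :=
  WithLp.toLp 2 (fun i => x i.castSucc / (1 - x (Fin.last d)))

open Finset in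
lemma norm_sq_eucl {n : ℕ} (x : EuclideanSpace ℝ (Fin n)) :
    ‖x‖ ^ 2 = ∑ i, (x i) ^ 2 := by
  rw [EuclideanSpace.norm_eq, Real.sq_sqrt (by positivity)]
  simp [sq_abs]

open Finset in
lemma stereo_key (d : ℕ) (a b : EuclideanSpace ℝ (Fin (d + 1)))
    (ha : ‖a‖ = 1) (hb : ‖b‖ = 1)
    (hα : 1 - a (Fin.last d) ≠ 0) (hβ : 1 - b (Fin.last d) ≠ 0) :
    ‖stereoProj d a - stereoProj d b‖ ^ 2
      = ‖a - b‖ ^ 2 / ((1 - a (Fin.last d)) * (1 - b (Fin.last d))) := by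
  set α := 1 - a (Fin.last d) with hαdef
  set β := 1 - b (Fin.last d) with hβdef
  set S := ∑ i : Fin d, a i.castSucc * b i.castSucc with hSdef
  have hA : ∑ i : Fin d, (a i.castSucc) ^ 2 = 1 - (a (Fin.last d)) ^ 2 := by
    have := norm_sq_eucl a
    rw [ha, Fin.sum_univ_castSucc] at this
    linarith
  have hB : ∑ i : Fin d, (b i.castSucc) ^ 2 = 1 - (b (Fin.last d)) ^ 2 := by
    have := norm_sq_eucl b
    rw [hb, Fin.sum_univ_castSucc] at this
    linarith
  have hinner : (inner ℝ a b : ℝ) = S + a (Fin.last d) * b (Fin.last d) := by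
    rw [PiLp.inner_apply, Fin.sum_univ_castSucc]
    simp [RCLike.inner_apply, hSdef, mul_comm]
  have habS : ‖a - b‖ ^ 2 = 2 - 2 * (S + a (Fin.last d) * b (Fin.last d)) := by
    rw [norm_sub_sq_real, ha, hb, hinner]; ring
  have hpi : ‖stereoProj d a - stereoProj d b‖ ^ 2
      = ∑ i : Fin d, (a i.castSucc / α - b i.castSucc / β) ^ 2 := by
    rw [norm_sq_eucl]
    apply Finset.sum_congr rfl
    intro i _
    simp [stereoProj, PiLp.sub_apply, hαdef, hβdef]
  have expand : ∀ i : Fin d,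
      (a i.castSucc / α - b i.castSucc / β) ^ 2
        = ((a i.castSucc) ^ 2 * β ^ 2 + (b i.castSucc) ^ 2 * α ^ 2
            - 2 * (α * β) * (a i.castSucc * b i.castSucc)) / (α * β) ^ 2 := by
    intro i
    field_simp
    ring
  rw [hpi, Finset.sum_congr rfl fun i _ => expand i, ← Finset.sum_div]
  have hsum : ∑ i : Fin d, ((a i.castSucc) ^ 2 * β ^ 2 + (b i.castSucc) ^ 2 * α ^ 2
        - 2 * (α * β) * (a i.castSucc * b i.castSucc))
      = (1 - (a (Fin.last d)) ^ 2) * β ^ 2 + (1 - (b (Fin.last d)) ^ 2) * α ^ 2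
        - 2 * (α * β) * S := by
    simp only [Finset.sum_sub_distrib, Finset.sum_add_distrib, ← Finset.sum_mul,
      ← Finset.mul_sum, hA, hB, hSdef]
  rw [hsum, habS, hαdef, hβdef]
  have hα' : 1 - a (Fin.last d) ≠ 0 := hα
  have hβ' : 1 - b (Fin.last d) ≠ 0 := hβ
  field_simp
  ring

/-- For every `t < 1` and all `a, b ∈ S^d` with last coordinates `≤ t`, one has
`‖π(a) - π(b)‖ ≤ ((2-t)/(1-t)²)·dist(a,b)`, with `dist` the geodesic distance. -/
theorem stereoProj_dist_upper_bound (d : ℕ) (t : ℝ) (ht : t < 1)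
    (a b : EuclideanSpace ℝ (Fin (d + 1)))
    (ha : a ∈ Metric.sphere (0 : EuclideanSpace ℝ (Fin (d + 1))) 1)
    (hb : b ∈ Metric.sphere (0 : EuclideanSpace ℝ (Fin (d + 1))) 1)
    (hat : a (Fin.last d) ≤ t) (hbt : b (Fin.last d) ≤ t) :
    ‖stereoProj d a - stereoProj d b‖ ≤
      ((2 - t) / (1 - t) ^ 2) * InnerProductGeometry.angle a b := by
  rw [mem_sphere_zero_iff_norm] at ha hb
  have ht' : (0:ℝ) < 1 - t := by linarith
  have hα : 1 - t ≤ 1 - a (Fin.last d) := by linarith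
  have hβ : 1 - t ≤ 1 - b (Fin.last d) := by linarith
  set θ := InnerProductGeometry.angle a b with hθ
  have hθ0 : 0 ≤ θ := InnerProductGeometry.angle_nonneg a b
  have hcos : Real.cos θ = inner ℝ a b := by
    rw [hθ, InnerProductGeometry.cos_angle, ha, hb]; simp
  have hchord : ‖a - b‖ ^ 2 ≤ θ ^ 2 := by
    have h1 : 1 - θ ^ 2 / 2 ≤ Real.cos θ := Real.one_sub_sq_div_two_le_cos
    have h2 : ‖a - b‖ ^ 2 = 2 - 2 * Real.cos θ := by
      rw [norm_sub_sq_real, ha, hb, hcos]; ring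
    linarith
  have hkey := stereo_key d a b ha hb (ne_of_gt (by linarith)) (ne_of_gt (by linarith))
  have hsq : ‖stereoProj d a - stereoProj d b‖ ^ 2 ≤ (θ / (1 - t)) ^ 2 := by
    rw [hkey, div_pow]
    apply div_le_div₀ (by positivity) hchord (by positivity)
    nlinarith
  have h1 : ‖stereoProj d a - stereoProj d b‖ ≤ θ / (1 - t) :=
    (pow_le_pow_iff_left₀ (norm_nonneg _) (by positivity) two_ne_zero).mp hsq
  have h2 : θ / (1 - t) ≤ ((2 - t) / (1 - t) ^ 2) * θ := by
    rw [div_eq_mul_inv, mul_comm]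
    apply mul_le_mul_of_nonneg_right _ hθ0
    rw [inv_le_iff_one_le_mul₀ ht', div_mul_eq_mul_div, le_div_iff₀ (by positivity)]
    nlinarith
  linarith
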